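/- arXiv:1402.6250 — 2 statements merged into one kernel-verified Lean document; each statement's English description precedes it below -/
import Mathlib

section
/- For every almost periodic h : ℤ^d → ℂ^r, the Bohr spectrum Λ(h) = {ω ∈ 𝕋^d : [h, e_ω] ≠ 0} is a countable set. -/
open Filter

noncomputable section

/-- The multi-power `z^k = z₁^{k₁} ⋯ z_d^{k_d}` for `z ∈ ℂ^d`, `k ∈ ℤ^d`. -/
def zpowVec {d : ℕ} (z : Fin d → ℂ) (k : Fin d → ℤ) : ℂ := ∏ j, z j ^ (k j)

/-- Membership in the `d`-torus `𝕋^d`. -/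
def OnTorus {d : ℕ} (z : Fin d → ℂ) : Prop := ∀ j, ‖z j‖ = 1

/-- The box `{k ∈ ℤ^d : |k_j| ≤ N for all j}`. -/
def box (d : ℕ) (N : ℕ) : Finset (Fin d → ℤ) :=
  Fintype.piFinset fun _ => Finset.Icc (-(N : ℤ)) (N : ℤ)

/-- The average `(2N+1)^{-d} ∑_{|k_j| ≤ N} f(k)`. -/
def boxAvg {d : ℕ} (f : (Fin d → ℤ) → ℂ) (N : ℕ) : ℂ :=
  (((2 * N + 1 : ℕ) : ℂ) ^ d)⁻¹ * ∑ k ∈ box d N, f k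

/-- `f : ℤ^d → ℂ` has mean value `L`. -/
def HasMean {d : ℕ} (f : (Fin d → ℤ) → ℂ) (L : ℂ) : Prop :=
  Tendsto (boxAvg f) atTop (nhds L)

/-- The mean pairing `[h, g] = lim_N (2N+1)^{-d} ∑_{|k_j| ≤ N} h(k) ⬝ conj (g(k))`,
computed componentwise, has value `L`. -/
def HasMeanPairing {d : ℕ} {ι : Type} [Fintype ι]
    (h : (Fin d → ℤ) → ι → ℂ) (g : (Fin d → ℤ) → ℂ) (L : ι → ℂ) : Prop :=
  ∀ i, HasMean (fun k => h k i * (starRingEnd ℂ) (g k)) (L i)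

/-- The pure frequency sequence `e_ω(k) = ω^k`. -/
def eOmega {d : ℕ} (ω : Fin d → ℂ) : (Fin d → ℤ) → ℂ := fun k => zpowVec ω k

/-- Bohr almost periodicity for a bounded `h : ℤ^d → ℂ^ι`: for every `ε > 0`
there is `R > 0` such that every closed Euclidean ball of radius `R` in `ℝ^d`
contains an `ε`-translation vector `l` of `h`, i.e. `‖R_l h - h‖_∞ < ε`. -/
def IsBohrAP {d : ℕ} {ι : Type} [Fintype ι] (h : (Fin d → ℤ) → ι → ℂ) : Prop :=
  (∃ M : ℝ, ∀ k i, ‖h k i‖ ≤ M) ∧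
  ∀ ε > (0 : ℝ), ∃ R > (0 : ℝ), ∀ c : Fin d → ℝ, ∃ l : Fin d → ℤ,
    Real.sqrt (∑ j, ((l j : ℝ) - c j) ^ 2) ≤ R ∧
    ∀ k i, ‖h (fun j => k j - l j) i - h k i‖ < ε


lemma box_card (d N : ℕ) : (box d N).card = (2*N+1)^d := by
  simp only [box, Fintype.card_piFinset, Int.card_Icc]
  have : ((N:ℤ) + 1 + (N:ℤ)).toNat = 2*N+1 := by omega
  simp [this]

lemma boxAvg_sum {d : ℕ} {α : Type*} (s : Finset α) (F : α → (Fin d → ℤ) → ℂ) (N : ℕ) :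
    boxAvg (fun k => ∑ a ∈ s, F a k) N = ∑ a ∈ s, boxAvg (F a) N := by
  simp only [boxAvg, Finset.mul_sum]
  rw [Finset.sum_comm]

lemma boxAvg_add {d : ℕ} (f g : (Fin d → ℤ) → ℂ) (N : ℕ) :
    boxAvg (fun k => f k + g k) N = boxAvg f N + boxAvg g N := by
  simp [boxAvg, Finset.sum_add_distrib, mul_add]

lemma boxAvg_sub {d : ℕ} (f g : (Fin d → ℤ) → ℂ) (N : ℕ) :
    boxAvg (fun k => f k - g k) N = boxAvg f N - boxAvg g N := by
  simp [boxAvg, Finset.sum_sub_distrib, mul_sub]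

lemma boxAvg_const_mul {d : ℕ} (c : ℂ) (f : (Fin d → ℤ) → ℂ) (N : ℕ) :
    boxAvg (fun k => c * f k) N = c * boxAvg f N := by
  simp only [boxAvg, Finset.mul_sum]
  exact Finset.sum_congr rfl fun k _ => by ring

lemma boxAvg_conj {d : ℕ} (f : (Fin d → ℤ) → ℂ) (N : ℕ) :
    boxAvg (fun k => (starRingEnd ℂ) (f k)) N = (starRingEnd ℂ) (boxAvg f N) := by
  rw [boxAvg, boxAvg, map_mul, map_inv₀, map_pow, map_sum, map_natCast]


lemma boxAvg_ofReal {d : ℕ} (g : (Fin d → ℤ) → ℝ) (N : ℕ) :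
    boxAvg (fun k => (g k : ℂ)) N = ((((2*N+1:ℕ):ℝ)^d)⁻¹ * ∑ k ∈ box d N, g k : ℝ) := by
  push_cast [boxAvg]; ring

lemma abs_boxAvg_le {d : ℕ} {f : (Fin d → ℤ) → ℂ} {C : ℝ} (hC : ∀ k, ‖f k‖ ≤ C)
    (hC0 : 0 ≤ C) (N : ℕ) : ‖boxAvg f N‖ ≤ C := by
  have h1 : ‖∑ k ∈ box d N, f k‖ ≤ ((2*N+1)^d : ℕ) * C := by
    calc ‖∑ k ∈ box d N, f k‖ ≤ ∑ k ∈ box d N, ‖f k‖ :=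
          norm_sum_le _ _
      _ ≤ ∑ _k ∈ box d N, C := Finset.sum_le_sum fun k _ => hC k
      _ = ((2*N+1)^d : ℕ) * C := by rw [Finset.sum_const, box_card]; push_cast; ring
  have h2 : ‖(((2 * N + 1 : ℕ) : ℂ) ^ d)⁻¹‖ = (((2*N+1)^d : ℕ) : ℝ)⁻¹ := by
    rw [norm_inv, norm_pow, Complex.norm_natCast]; push_cast; ring
  rw [boxAvg, norm_mul, h2]
  have hpos : (0:ℝ) < ((2*N+1)^d : ℕ) := by positivity
  rw [inv_mul_le_iff₀ hpos]
  exact h1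

lemma abs_zpow_one {z : ℂ} (hz : ‖z‖ = 1) (k : ℤ) : ‖z ^ k‖ = 1 := by
  rw [norm_zpow, hz, one_zpow]

lemma sum_Icc_zpow (μ : ℂ) (hμ : μ ≠ 0) (N : ℕ) :
    ∑ m ∈ Finset.Icc (-(N:ℤ)) N, μ ^ m
      = μ ^ (-(N:ℤ)) * ∑ i ∈ Finset.range (2*N+1), μ ^ i := by
  rw [Finset.mul_sum]
  refine Finset.sum_nbij' (fun m => (m + N).toNat) (fun i => (i:ℤ) - N) ?_ ?_ ?_ ?_ ?_
  · intro a ha; simp only [Finset.mem_Icc] at ha; simp only [Finset.mem_range]; omega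
  · intro a ha; simp only [Finset.mem_range] at ha; simp only [Finset.mem_Icc]; omega
  · intro a ha; simp only [Finset.mem_Icc] at ha
    show (((a + (N:ℤ)).toNat : ℤ)) - N = a; omega
  · intro a ha; simp only [Finset.mem_range] at ha
    show (((a:ℤ) - N + N).toNat) = a; omega
  · intro a ha; simp only [Finset.mem_Icc] at ha
    rw [← zpow_natCast μ ((a + N).toNat), ← zpow_add₀ hμ]
    congr 1; omega

lemma geom_avg_tendsto {μ : ℂ} (hμa : ‖μ‖ = 1) (hμ1 : μ ≠ 1) :
    Tendsto (fun N : ℕ => (((2*N+1:ℕ):ℂ))⁻¹ * ∑ m ∈ Finset.Icc (-(N:ℤ)) N, μ ^ m)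
      atTop (nhds 0) := by
  have hμ0 : μ ≠ 0 := by intro h; rw [h] at hμa; simp at hμa
  have hd : 0 < ‖μ - 1‖ := by
    rw [norm_pos_iff]; exact sub_ne_zero.mpr hμ1
  rw [tendsto_zero_iff_norm_tendsto_zero]
  refine squeeze_zero (fun N => norm_nonneg _)
    (g := fun N => (2 / ‖μ - 1‖) / ((2*N+1:ℕ):ℝ)) ?_ ?_
  · intro N
    rw [sum_Icc_zpow μ hμ0 N, geom_sum_eq hμ1, norm_mul, norm_mul,
      norm_div, norm_inv, Complex.norm_natCast, abs_zpow_one hμa, one_mul,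
      inv_mul_eq_div, div_div, div_div]
    have h2 : ‖μ ^ (2*N+1) - 1‖ ≤ 2 := by
      calc ‖μ ^ (2*N+1) - 1‖ ≤ ‖μ ^ (2*N+1)‖ + ‖(1:ℂ)‖ :=
            norm_sub_le _ _
        _ = 2 := by rw [norm_pow, hμa]; norm_num
    gcongr
  · refine Tendsto.div_atTop tendsto_const_nhds ?_
    exact tendsto_natCast_atTop_atTop.comp
      (tendsto_atTop_mono (fun n => by simp only [id_eq]; omega) tendsto_id)

lemma boxAvg_zpowVec {d : ℕ} (μ : Fin d → ℂ) (N : ℕ) :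
    boxAvg (fun k => zpowVec μ k) N
      = ∏ j, ((((2*N+1:ℕ):ℂ))⁻¹ * ∑ m ∈ Finset.Icc (-(N:ℤ)) N, μ j ^ m) := by
  unfold boxAvg box zpowVec
  rw [Finset.prod_mul_distrib, Finset.prod_const, Finset.prod_univ_sum]
  simp [inv_pow]

lemma eOmega_mul_conj {d : ℕ} (ω ω' : Fin d → ℂ) (k : Fin d → ℤ) :
    eOmega ω k * (starRingEnd ℂ) (eOmega ω' k)
      = zpowVec (fun j => ω j * (starRingEnd ℂ) (ω' j)) k := by
  unfold eOmega zpowVec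
  rw [map_prod, ← Finset.prod_mul_distrib]
  refine Finset.prod_congr rfl fun j _ => ?_
  rw [map_zpow₀, ← mul_zpow]

lemma abs_eOmega {d : ℕ} {ω : Fin d → ℂ} (hω : OnTorus ω) (k : Fin d → ℤ) :
    ‖eOmega ω k‖ = 1 := by
  unfold eOmega zpowVec
  rw [norm_prod]
  exact Finset.prod_eq_one fun j _ => abs_zpow_one (hω j) _

lemma hasMean_eOmega_self {d : ℕ} {ω : Fin d → ℂ} (hω : OnTorus ω) :
    HasMean (fun k => eOmega ω k * (starRingEnd ℂ) (eOmega ω k)) 1 := by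
  have hpt : ∀ k, eOmega ω k * (starRingEnd ℂ) (eOmega ω k) = 1 := by
    intro k
    rw [Complex.mul_conj, Complex.normSq_eq_norm_sq, abs_eOmega hω]
    norm_num
  have hone : ∀ N, boxAvg (fun _ : Fin d → ℤ => (1:ℂ)) N = 1 := by
    intro N
    rw [boxAvg, Finset.sum_const, box_card]
    have h0 : (((2 * N + 1 : ℕ) : ℂ)) ≠ 0 := by exact_mod_cast Nat.succ_ne_zero (2*N)
    have : (((2 * N + 1 : ℕ) : ℂ) ^ d) ≠ 0 := pow_ne_zero _ h0
    simp only [nsmul_eq_mul, mul_one]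
    push_cast
    rw [inv_mul_cancel₀]
    push_cast at this ⊢
    exact this
  rw [HasMean, funext hpt, funext hone]
  exact tendsto_const_nhds

lemma hasMean_eOmega_ne {d : ℕ} {ω ω' : Fin d → ℂ} (hω : OnTorus ω) (hω' : OnTorus ω')
    (hne : ω ≠ ω') :
    HasMean (fun k => eOmega ω k * (starRingEnd ℂ) (eOmega ω' k)) 0 := by
  set μ : Fin d → ℂ := fun j => ω j * (starRingEnd ℂ) (ω' j) with hμdef
  have hfun : (fun k => eOmega ω k * (starRingEnd ℂ) (eOmega ω' k)) = fun k => zpowVec μ k :=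
    funext fun k => eOmega_mul_conj ω ω' k
  rw [HasMean, hfun, funext (boxAvg_zpowVec μ)]
  obtain ⟨j0, hj0⟩ := Function.ne_iff.mp hne
  have habs : ∀ j, ‖μ j‖ = 1 := fun j => by
    rw [hμdef]; simp only [norm_mul, Complex.norm_conj, hω j, hω' j, mul_one]
  have hμ1 : μ j0 ≠ 1 := by
    intro hcontra
    apply hj0
    have h0 : ω' j0 ≠ 0 := by
      intro h; have := hω' j0; rw [h] at this; simp at this
    have hns : Complex.normSq (ω' j0) = 1 := by
      rw [Complex.normSq_eq_norm_sq, hω' j0]; norm_num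
    have hco : (starRingEnd ℂ) (ω' j0) = (ω' j0)⁻¹ := by
      rw [Complex.inv_def, hns]; simp
    rw [hμdef] at hcontra
    simp only at hcontra
    rw [hco, mul_inv_eq_one₀ h0] at hcontra
    exact hcontra
  set a : Fin d → ℕ → ℂ :=
    fun j N => (((2*N+1:ℕ):ℂ))⁻¹ * ∑ m ∈ Finset.Icc (-(N:ℤ)) N, μ j ^ m with hadef
  have hbound : ∀ j N, ‖a j N‖ ≤ 1 := by
    intro j N
    rw [hadef]
    simp only [norm_mul, norm_inv, Complex.norm_natCast]
    have hsum : ‖∑ m ∈ Finset.Icc (-(N:ℤ)) N, μ j ^ m‖ ≤ ((2*N+1:ℕ):ℝ) := by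
      calc ‖∑ m ∈ Finset.Icc (-(N:ℤ)) N, μ j ^ m‖
          ≤ ∑ m ∈ Finset.Icc (-(N:ℤ)) N, ‖μ j ^ m‖ :=
            norm_sum_le _ _
        _ = ∑ _m ∈ Finset.Icc (-(N:ℤ)) N, (1:ℝ) :=
            Finset.sum_congr rfl fun m _ => abs_zpow_one (habs j) m
        _ = ((2*N+1:ℕ):ℝ) := by
            rw [Finset.sum_const, Int.card_Icc]
            have : ((N:ℤ) + 1 + (N:ℤ)).toNat = 2*N+1 := by omega
            simp [this]
    have hpos : (0:ℝ) < ((2*N+1:ℕ):ℝ) := by positivity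
    rw [inv_mul_le_iff₀ hpos, mul_one]
    exact hsum
  rw [tendsto_zero_iff_norm_tendsto_zero]
  refine squeeze_zero (fun N => norm_nonneg _) (g := fun N => ‖a j0 N‖) ?_ ?_
  · intro N
    rw [norm_prod]
    calc ∏ j, ‖a j N‖
        = ‖a j0 N‖ * ∏ j ∈ Finset.univ.erase j0, ‖a j N‖ :=
          (Finset.mul_prod_erase _ _ (Finset.mem_univ j0)).symm
      _ ≤ ‖a j0 N‖ * 1 := by
          refine mul_le_mul_of_nonneg_left ?_ (norm_nonneg _)
          exact Finset.prod_le_one (fun j _ => norm_nonneg _)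
            (fun j _ => hbound j N)
      _ = ‖a j0 N‖ := mul_one _
  · have h := geom_avg_tendsto (habs j0) hμ1
    rw [tendsto_zero_iff_norm_tendsto_zero] at h
    exact h

lemma bessel {d : ℕ} (f : (Fin d → ℤ) → ℂ) (M : ℝ) (hM : ∀ k, ‖f k‖ ≤ M)
    (s : Finset (Fin d → ℂ)) (hs : ∀ ω ∈ s, OnTorus ω)
    (c : (Fin d → ℂ) → ℂ)
    (hc : ∀ ω ∈ s, HasMean (fun k => f k * (starRingEnd ℂ) (eOmega ω k)) (c ω)) :
    ∑ ω ∈ s, Complex.normSq (c ω) ≤ M^2 := by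
  classical
  have hM0 : 0 ≤ M := le_trans (norm_nonneg _) (hM fun _ => 0)
  set S : (Fin d → ℤ) → ℂ := fun k => ∑ ω ∈ s, c ω * eOmega ω k with hSdef
  set T : ℕ → ℂ := fun N => boxAvg (fun k => (f k - S k) * (starRingEnd ℂ) (f k - S k)) N with hTdef
  set P : ℕ → ℂ := fun N => boxAvg (fun k => f k * (starRingEnd ℂ) (f k)) N with hPdef
  set A : ℕ → ℂ := fun N => boxAvg (fun k => f k * (starRingEnd ℂ) (S k)) N with hAdef
  set B : ℕ → ℂ := fun N => boxAvg (fun k => S k * (starRingEnd ℂ) (f k)) N with hBdef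
  set C : ℕ → ℂ := fun N => boxAvg (fun k => S k * (starRingEnd ℂ) (S k)) N with hCdef
  -- decomposition
  have hT : ∀ N, T N = P N - A N - B N + C N := by
    intro N
    have hpt : (fun k => (f k - S k) * (starRingEnd ℂ) (f k - S k))
        = fun k => (f k * (starRingEnd ℂ) (f k) - f k * (starRingEnd ℂ) (S k) - S k * (starRingEnd ℂ) (f k))
            + S k * (starRingEnd ℂ) (S k) := by
      funext k; rw [map_sub]; ring
    rw [hTdef]
    simp only [hpt]
    rw [boxAvg_add, boxAvg_sub, boxAvg_sub]
  -- A as a sum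
  have hA : ∀ N, A N = ∑ ω ∈ s, (starRingEnd ℂ) (c ω) * boxAvg (fun k => f k * (starRingEnd ℂ) (eOmega ω k)) N := by
    intro N
    have hpt : (fun k => f k * (starRingEnd ℂ) (S k))
        = fun k => ∑ ω ∈ s, (starRingEnd ℂ) (c ω) * (f k * (starRingEnd ℂ) (eOmega ω k)) := by
      funext k
      rw [hSdef]
      simp only [map_sum, map_mul, Finset.mul_sum]
      exact Finset.sum_congr rfl fun ω _ => by ring
    rw [hAdef]
    simp only [hpt]
    rw [boxAvg_sum]
    exact Finset.sum_congr rfl fun ω _ => boxAvg_const_mul _ _ _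
  have hB : ∀ N, B N = ∑ ω ∈ s, c ω * (starRingEnd ℂ) (boxAvg (fun k => f k * (starRingEnd ℂ) (eOmega ω k)) N) := by
    intro N
    have hpt : (fun k => S k * (starRingEnd ℂ) (f k))
        = fun k => ∑ ω ∈ s, c ω * (starRingEnd ℂ) (f k * (starRingEnd ℂ) (eOmega ω k)) := by
      funext k
      rw [hSdef]
      simp only [map_mul, Finset.sum_mul, Complex.conj_conj]
      exact Finset.sum_congr rfl fun ω _ => by ring
    rw [hBdef]
    simp only [hpt]
    rw [boxAvg_sum]
    exact Finset.sum_congr rfl fun ω _ => by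
      rw [boxAvg_const_mul, boxAvg_conj]
  have hC : ∀ N, C N = ∑ ω ∈ s, ∑ ω' ∈ s,
      (c ω * (starRingEnd ℂ) (c ω')) * boxAvg (fun k => eOmega ω k * (starRingEnd ℂ) (eOmega ω' k)) N := by
    intro N
    have hpt : (fun k => S k * (starRingEnd ℂ) (S k))
        = fun k => ∑ ω ∈ s, ∑ ω' ∈ s,
            (c ω * (starRingEnd ℂ) (c ω')) * (eOmega ω k * (starRingEnd ℂ) (eOmega ω' k)) := by
      funext k
      rw [hSdef]
      simp only [map_sum, map_mul, Finset.sum_mul, Finset.mul_sum]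
      rw [Finset.sum_comm]
      refine Finset.sum_congr rfl fun ω _ => Finset.sum_congr rfl fun ω' _ => by ring
    rw [hCdef]
    simp only [hpt]
    rw [boxAvg_sum]
    refine Finset.sum_congr rfl fun ω _ => ?_
    rw [boxAvg_sum]
    exact Finset.sum_congr rfl fun ω' _ => boxAvg_const_mul _ _ _
  -- limits
  have hAlim : Tendsto A atTop (nhds (∑ ω ∈ s, (Complex.normSq (c ω) : ℂ))) := by
    rw [funext hA]
    have : ∀ ω ∈ s, Tendsto
        (fun N => (starRingEnd ℂ) (c ω) * boxAvg (fun k => f k * (starRingEnd ℂ) (eOmega ω k)) N)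
        atTop (nhds ((starRingEnd ℂ) (c ω) * c ω)) :=
      fun ω hω => Tendsto.const_mul _ (hc ω hω)
    have h2 := tendsto_finset_sum s this
    have he : ∑ ω ∈ s, (starRingEnd ℂ) (c ω) * c ω = ∑ ω ∈ s, (Complex.normSq (c ω) : ℂ) :=
      Finset.sum_congr rfl fun ω _ => by rw [mul_comm, Complex.mul_conj]
    rwa [he] at h2
  have hBlim : Tendsto B atTop (nhds (∑ ω ∈ s, (Complex.normSq (c ω) : ℂ))) := by
    rw [funext hB]
    have : ∀ ω ∈ s, Tendsto
        (fun N => c ω * (starRingEnd ℂ) (boxAvg (fun k => f k * (starRingEnd ℂ) (eOmega ω k)) N))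
        atTop (nhds (c ω * (starRingEnd ℂ) (c ω))) := by
      intro ω hω
      exact Tendsto.const_mul _ ((Complex.continuous_conj.tendsto _).comp (hc ω hω))
    have h2 := tendsto_finset_sum s this
    have he : ∑ ω ∈ s, c ω * (starRingEnd ℂ) (c ω) = ∑ ω ∈ s, (Complex.normSq (c ω) : ℂ) :=
      Finset.sum_congr rfl fun ω _ => Complex.mul_conj _
    rwa [he] at h2
  have hClim : Tendsto C atTop (nhds (∑ ω ∈ s, (Complex.normSq (c ω) : ℂ))) := by
    rw [funext hC]
    have hinner : ∀ ω ∈ s, Tendsto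
        (fun N => ∑ ω' ∈ s, (c ω * (starRingEnd ℂ) (c ω'))
          * boxAvg (fun k => eOmega ω k * (starRingEnd ℂ) (eOmega ω' k)) N)
        atTop (nhds (∑ ω' ∈ s, (c ω * (starRingEnd ℂ) (c ω')) * (if ω' = ω then 1 else 0))) := by
      intro ω hω
      refine tendsto_finset_sum s fun ω' hω' => Tendsto.const_mul _ ?_
      by_cases hee : ω = ω'
      · subst hee; simp only [if_pos rfl]; exact hasMean_eOmega_self (hs ω hω)
      · simp only [if_neg (Ne.symm hee)]
        exact hasMean_eOmega_ne (hs ω hω) (hs ω' hω') hee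
    have h2 := tendsto_finset_sum s hinner
    have he : (∑ ω ∈ s, ∑ ω' ∈ s, (c ω * (starRingEnd ℂ) (c ω')) * (if ω' = ω then 1 else 0))
        = ∑ ω ∈ s, (Complex.normSq (c ω) : ℂ) := by
      refine Finset.sum_congr rfl fun ω hω => ?_
      have hterm : ∀ ω' ∈ s, (c ω * (starRingEnd ℂ) (c ω')) * (if ω' = ω then 1 else 0)
          = if ω' = ω then c ω * (starRingEnd ℂ) (c ω') else 0 := fun ω' _ => by
        split <;> simp
      rw [Finset.sum_congr rfl hterm, Finset.sum_ite_eq' s ω (fun ω' => c ω * (starRingEnd ℂ) (c ω')),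
        if_pos hω, Complex.mul_conj]
    rwa [he] at h2
  -- limit of T - P
  have hGlim : Tendsto (fun N => T N - P N) atTop
      (nhds (-(∑ ω ∈ s, (Complex.normSq (c ω) : ℂ)))) := by
    have hfun : (fun N => T N - P N) = fun N => C N - A N - B N := by
      funext N; rw [hT N]; ring
    rw [hfun]
    have hval : -(∑ ω ∈ s, (Complex.normSq (c ω) : ℂ))
        = (∑ ω ∈ s, (Complex.normSq (c ω) : ℂ)) - (∑ ω ∈ s, (Complex.normSq (c ω) : ℂ))
          - (∑ ω ∈ s, (Complex.normSq (c ω) : ℂ)) := by ring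
    rw [hval]
    exact (hClim.sub hAlim).sub hBlim
  -- realness and bounds
  have hTre : ∀ N, 0 ≤ (T N).re := by
    intro N
    have hfn : (fun k => (f k - S k) * (starRingEnd ℂ) (f k - S k))
        = fun k => ((Complex.normSq (f k - S k) : ℝ) : ℂ) :=
      funext fun k => Complex.mul_conj _
    rw [hTdef]
    simp only [hfn, boxAvg_ofReal, Complex.ofReal_re]
    have h1 : (0:ℝ) ≤ ((((2*N+1:ℕ):ℝ))^d)⁻¹ := by positivity
    have h2 : (0:ℝ) ≤ ∑ k ∈ box d N, Complex.normSq (f k - S k) :=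
      Finset.sum_nonneg fun k _ => Complex.normSq_nonneg _
    exact mul_nonneg h1 h2
  have hPle : ∀ N, (P N).re ≤ M^2 := by
    intro N
    have hfn : (fun k => f k * (starRingEnd ℂ) (f k))
        = fun k => ((Complex.normSq (f k) : ℝ) : ℂ) :=
      funext fun k => Complex.mul_conj _
    rw [hPdef]
    simp only [hfn, boxAvg_ofReal, Complex.ofReal_re]
    have hsum : ∑ k ∈ box d N, Complex.normSq (f k) ≤ (((2*N+1:ℕ):ℝ))^d * M^2 := by
      calc ∑ k ∈ box d N, Complex.normSq (f k)
          ≤ ∑ _k ∈ box d N, M^2 := Finset.sum_le_sum fun k _ => by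
            rw [Complex.normSq_eq_norm_sq]
            exact pow_le_pow_left₀ (norm_nonneg _) (hM k) 2
        _ = (((2*N+1:ℕ):ℝ))^d * M^2 := by
            rw [Finset.sum_const, box_card]; push_cast; ring
    have hpos : (0:ℝ) < (((2*N+1:ℕ):ℝ))^d := by positivity
    rw [inv_mul_le_iff₀ hpos]
    exact hsum.trans_eq (by ring)
  have hlow : ∀ N, -(M^2) ≤ (T N - P N).re := by
    intro N
    rw [Complex.sub_re]
    have h1 := hTre N
    have h2 := hPle N
    linarith
  have hrelim : Tendsto (fun N => (T N - P N).re) atTop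
      (nhds ((-(∑ ω ∈ s, (Complex.normSq (c ω) : ℂ))).re)) :=
    (Complex.continuous_re.tendsto _).comp hGlim
  have hfin := ge_of_tendsto' hrelim hlow
  have hre : (-(∑ ω ∈ s, (Complex.normSq (c ω) : ℂ))).re
      = -(∑ ω ∈ s, Complex.normSq (c ω)) := by
    rw [← Complex.ofReal_sum, Complex.neg_re, Complex.ofReal_re]
  rw [hre] at hfin
  linarith

lemma level_set_finite {d : ℕ} (f : (Fin d → ℤ) → ℂ) (M : ℝ) (hM : ∀ k, ‖f k‖ ≤ M)
    {ε : ℝ} (hε : 0 < ε) :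
    {ω : Fin d → ℂ | OnTorus ω ∧ ∃ cv : ℂ, ε ≤ ‖cv‖ ∧
      HasMean (fun k => f k * (starRingEnd ℂ) (eOmega ω k)) cv}.Finite := by
  classical
  by_contra hinf
  have hinf' : Set.Infinite _ := hinf
  obtain ⟨t, hts, htcard⟩ := hinf'.exists_subset_card_eq (⌈M^2/ε^2⌉₊ + 1)
  have hch : ∀ ω ∈ t, ∃ cv : ℂ, ε ≤ ‖cv‖ ∧
      HasMean (fun k => f k * (starRingEnd ℂ) (eOmega ω k)) cv :=
    fun ω hω => (hts (Finset.mem_coe.mpr hω)).2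
  choose! cfun hc1 hc2 using hch
  have hb := bessel f M hM t (fun ω hω => (hts (Finset.mem_coe.mpr hω)).1) cfun hc2
  have hε2 : (0:ℝ) < ε^2 := by positivity
  have hlow : ∀ ω ∈ t, ε^2 ≤ Complex.normSq (cfun ω) := by
    intro ω hω
    rw [Complex.normSq_eq_norm_sq]
    exact pow_le_pow_left₀ hε.le (hc1 ω hω) 2
  have hcard : (t.card : ℝ) * ε^2 ≤ M^2 := by
    calc (t.card:ℝ) * ε^2 = ∑ _ω ∈ t, ε^2 := by
          rw [Finset.sum_const, nsmul_eq_mul]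
      _ ≤ ∑ ω ∈ t, Complex.normSq (cfun ω) := Finset.sum_le_sum hlow
      _ ≤ M^2 := hb
  rw [htcard] at hcard
  have h1 : M^2 ≤ (⌈M^2/ε^2⌉₊ : ℝ) * ε^2 := by
    rw [← div_le_iff₀ hε2]
    exact Nat.le_ceil _
  push_cast at hcard
  nlinarith


/-- The Bohr spectrum `Λ(h) = {ω ∈ 𝕋^d : [h, e_ω] ≠ 0}` of an
almost periodic `h : ℤ^d → ℂ^r` is countable. -/
theorem bohrSpectrum_countable {d r : ℕ}
    (h : (Fin d → ℤ) → Fin r → ℂ) (hap : IsBohrAP h) :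
    Set.Countable {ω : Fin d → ℂ | OnTorus ω ∧
      ∃ L : Fin r → ℂ, L ≠ 0 ∧ HasMeanPairing h (eOmega ω) L} := by
  obtain ⟨M, hM⟩ := hap.1
  have hsub : {ω : Fin d → ℂ | OnTorus ω ∧
      ∃ L : Fin r → ℂ, L ≠ 0 ∧ HasMeanPairing h (eOmega ω) L}
      ⊆ ⋃ (i : Fin r) (m : ℕ),
        {ω : Fin d → ℂ | OnTorus ω ∧ ∃ cv : ℂ, 1/((m:ℝ)+1) ≤ ‖cv‖ ∧
          HasMean (fun k => h k i * (starRingEnd ℂ) (eOmega ω k)) cv} := by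
    intro ω hω
    obtain ⟨htor, L, hL0, hLP⟩ := hω
    obtain ⟨i, hi⟩ := Function.ne_iff.mp hL0
    have habs : 0 < ‖L i‖ := by
      rw [norm_pos_iff]
      simpa using hi
    obtain ⟨m, hm⟩ := exists_nat_one_div_lt habs
    refine Set.mem_iUnion.mpr ⟨i, Set.mem_iUnion.mpr ⟨m, ?_⟩⟩
    exact ⟨htor, L i, by push_cast at hm ⊢; linarith, hLP i⟩
  refine Set.Countable.mono hsub ?_
  refine Set.countable_iUnion fun i => Set.countable_iUnion fun m => ?_
  exact (level_set_finite (fun k => h k i) M (fun k => hM k i) (by positivity)).countable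
end
end

section
/- Let C be a crystal framework in ℝ^d and let u be an almost periodic infinitesimal flex of C, viewed as an almost periodic map ℤ^d → ℂ^{d|V₀|}. Then the Bohr spectrum of u is contained in the RUM spectrum of C: for every ω ∈ 𝕋^d with [u, e_ω] ≠ 0 one has ω ∈ Ω(C). -/
open Filter

noncomputable section

/-- A crystal framework in `ℝ^d`: a finite motif of vertices `V` placed by `p`,
a full-rank translation lattice generated by `a₁, …, a_d`, and a finite set of
motif edges `E` with endpoints `fst e = (v, l)` and `snd e = (w, m)` standing for
the joints `p(v, l)` and `p(w, m)`.  Joints are pairwise distinct and edge vectors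
are nonzero. -/
structure CrystalFramework (d : ℕ) where
  V : Type
  fintypeV : Fintype V
  decV : DecidableEq V
  E : Type
  fintypeE : Fintype E
  p : V → Fin d → ℝ
  a : Fin d → Fin d → ℝ
  indep : LinearIndependent ℝ a
  fst : E → V × (Fin d → ℤ)
  snd : E → V × (Fin d → ℤ)
  joint_injective : Function.Injective
    (fun vk : V × (Fin d → ℤ) =>
      (fun i => p vk.1 i + ∑ j, (vk.2 j : ℝ) * a j i : Fin d → ℝ))
  edge_nonzero : ∀ e : E,
    (fun i => p (fst e).1 i + ∑ j, ((fst e).2 j : ℝ) * a j i : Fin d → ℝ) ≠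
    (fun i => p (snd e).1 i + ∑ j, ((snd e).2 j : ℝ) * a j i)

attribute [instance] CrystalFramework.fintypeV CrystalFramework.decV CrystalFramework.fintypeE

namespace CrystalFramework

variable {d : ℕ} (C : CrystalFramework d)

/-- The joint `p(v, k) = p(v) + k₁a₁ + ⋯ + k_d a_d`. -/
def joint (v : C.V) (k : Fin d → ℤ) : Fin d → ℝ :=
  fun i => C.p v i + ∑ j, (k j : ℝ) * C.a j i

/-- The edge vector `p(e) = p(v, l) - p(w, m)` for the motif edge `e = ((v,l),(w,m))`. -/
def edgeVec (e : C.E) : Fin d → ℝ :=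
  fun i => C.joint (C.fst e).1 (C.fst e).2 i - C.joint (C.snd e).1 (C.snd e).2 i

/-- A complex velocity field `u` is an infinitesimal flex:
`p(e) ⋅ (u(v, l+k) - u(w, m+k)) = 0` for every motif edge and every `k ∈ ℤ^d`. -/
def IsFlex (u : C.V × (Fin d → ℤ) → Fin d → ℂ) : Prop :=
  ∀ (e : C.E) (k : Fin d → ℤ),
    ∑ i, (C.edgeVec e i : ℂ) *
      (u ((C.fst e).1, fun j => (C.fst e).2 j + k j) i -
       u ((C.snd e).1, fun j => (C.snd e).2 j + k j) i) = 0

/-- A real velocity field `u` is an infinitesimal flex. -/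
def IsRealFlex (u : C.V × (Fin d → ℤ) → Fin d → ℝ) : Prop :=
  ∀ (e : C.E) (k : Fin d → ℤ),
    ∑ i, C.edgeVec e i *
      (u ((C.fst e).1, fun j => (C.fst e).2 j + k j) i -
       u ((C.snd e).1, fun j => (C.snd e).2 j + k j) i) = 0

/-- A complex velocity field is trivial if the flex condition holds for every pair of joints. -/
def IsTrivial (u : C.V × (Fin d → ℤ) → Fin d → ℂ) : Prop :=
  ∀ (v w : C.V) (k k' : Fin d → ℤ),
    ∑ i, ((C.joint v k i - C.joint w k' i : ℝ) : ℂ) * (u (v, k) i - u (w, k') i) = 0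

/-- A real velocity field is trivial if the flex condition holds for every pair of joints. -/
def IsRealTrivial (u : C.V × (Fin d → ℤ) → Fin d → ℝ) : Prop :=
  ∀ (v w : C.V) (k k' : Fin d → ℤ),
    ∑ i, (C.joint v k i - C.joint w k' i) * (u (v, k) i - u (w, k') i) = 0

/-- A complex velocity field is strictly periodic if `u(v,k) = u(v,0)`. -/
def StrictlyPeriodic (u : C.V × (Fin d → ℤ) → Fin d → ℂ) : Prop :=
  ∀ (v : C.V) (k : Fin d → ℤ), u (v, k) = u (v, 0)

/-- A real velocity field is strictly periodic if `u(v,k) = u(v,0)`. -/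
def StrictlyPeriodicReal (u : C.V × (Fin d → ℤ) → Fin d → ℝ) : Prop :=
  ∀ (v : C.V) (k : Fin d → ℤ), u (v, k) = u (v, 0)

/-- The `ω`-phase-periodic velocity field `b ⊗ e_ω : (v,k) ↦ ω^k b(v)`. -/
def phaseField (ω : Fin d → ℂ) (b : C.V → Fin d → ℂ) :
    C.V × (Fin d → ℤ) → Fin d → ℂ :=
  fun vk i => zpowVec ω vk.2 * b vk.1 i

/-- The symbol function `Φ_C(z)`: the row of the motif edge `e = ((v,l),(w,m))` has
entries `z̄^l p(e)` in the columns of `v` and `-z̄^m p(e)` in the columns of `w`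
(in particular entries `(z̄^l - z̄^m) p(e)` in the columns of `v` when `v = w`). -/
def symbol (z : Fin d → ℂ) : Matrix C.E (C.V × Fin d) ℂ :=
  Matrix.of fun e xi =>
    (C.edgeVec e xi.2 : ℂ) *
      ((if xi.1 = (C.fst e).1 then
          zpowVec (fun j => (starRingEnd ℂ) (z j)) (C.fst e).2 else 0) -
       (if xi.1 = (C.snd e).1 then
          zpowVec (fun j => (starRingEnd ℂ) (z j)) (C.snd e).2 else 0))

/-- The RUM spectrum `Ω(C)`: the set of `ω ∈ 𝕋^d` admitting a nonzero
`ω`-phase-periodic infinitesimal flex. -/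
def RUM : Set (Fin d → ℂ) :=
  {ω | OnTorus ω ∧ ∃ b : C.V → Fin d → ℂ, b ≠ 0 ∧ C.IsFlex (C.phaseField ω b)}

end CrystalFramework

-- aux lemmas
lemma hasMean_congr {d : ℕ} {f g : (Fin d → ℤ) → ℂ} {L : ℂ}
    (h : ∀ k, f k = g k) (hf : HasMean f L) : HasMean g L := by
  have : f = g := funext h
  rwa [← this]

lemma HasMean.mul_const {d : ℕ} {f : (Fin d → ℤ) → ℂ} {L : ℂ}
    (hf : HasMean f L) (c : ℂ) : HasMean (fun k => f k * c) (L * c) := by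
  have h : Tendsto (fun N => boxAvg f N * c) atTop (nhds (L * c)) :=
    Filter.Tendsto.mul_const c hf
  refine h.congr fun N => ?_
  simp only [boxAvg, Finset.sum_mul, Finset.mul_sum]
  exact Finset.sum_congr rfl fun k _ => (mul_assoc _ _ _)

lemma HasMean.const_mul {d : ℕ} {f : (Fin d → ℤ) → ℂ} {L : ℂ}
    (hf : HasMean f L) (c : ℂ) : HasMean (fun k => c * f k) (c * L) := by
  have := hf.mul_const c
  rw [mul_comm]
  exact hasMean_congr (fun k => mul_comm (f k) c) this

lemma HasMean.sub {d : ℕ} {f g : (Fin d → ℤ) → ℂ} {Lf Lg : ℂ}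
    (hf : HasMean f Lf) (hg : HasMean g Lg) :
    HasMean (fun k => f k - g k) (Lf - Lg) := by
  have h : Tendsto (fun N => boxAvg f N - boxAvg g N) atTop (nhds (Lf - Lg)) :=
    Filter.Tendsto.sub hf hg
  refine h.congr fun N => ?_
  simp only [boxAvg, Finset.sum_sub_distrib]
  ring

lemma hasMean_finset_sum {d : ℕ} {ι : Type*} (s : Finset ι)
    (f : ι → (Fin d → ℤ) → ℂ) (L : ι → ℂ)
    (h : ∀ i ∈ s, HasMean (f i) (L i)) :
    HasMean (fun k => ∑ i ∈ s, f i k) (∑ i ∈ s, L i) := by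
  have h2 : Tendsto (fun N => ∑ i ∈ s, boxAvg (f i) N) atTop (nhds (∑ i ∈ s, L i)) :=
    tendsto_finset_sum s h
  refine h2.congr fun N => ?_
  simp only [boxAvg, Finset.mul_sum]
  rw [Finset.sum_comm]

lemma two_n_one_tendsto : Tendsto (fun N : ℕ => ((2 * N + 1 : ℕ) : ℝ)) atTop atTop := by
  have h : Tendsto (fun N : ℕ => 2 * N + 1) atTop atTop :=
    tendsto_atTop_mono (fun n => by simp only [id_eq]; omega) tendsto_id
  exact tendsto_natCast_atTop_atTop.comp h

lemma hasMean_shift {d : ℕ} {f : (Fin d → ℤ) → ℂ} {L : ℂ} {M : ℝ}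
    (hM : ∀ k, ‖f k‖ ≤ M) (hf : HasMean f L) (l : Fin d → ℤ) :
    HasMean (fun k => f (fun j => k j + l j)) L := by
  classical
  set g : (Fin d → ℤ) → ℂ := fun k => f (fun j => k j + l j) with hg
  set B : ℕ → Finset (Fin d → ℤ) :=
    fun N => Fintype.piFinset fun j => Finset.Icc (-(N : ℤ) + l j) ((N : ℤ) + l j) with hB
  have hsum : ∀ N, ∑ k ∈ box d N, g k = ∑ k ∈ B N, f k := by
    intro N
    refine Finset.sum_nbij' (fun k => fun j => k j + l j) (fun k => fun j => k j - l j)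
      ?_ ?_ ?_ ?_ ?_
    · intro a ha
      simp only [box, Fintype.mem_piFinset, Finset.mem_Icc] at ha
      simp only [hB, Fintype.mem_piFinset, Finset.mem_Icc]
      intro j; have := ha j; omega
    · intro a ha
      simp only [hB, Fintype.mem_piFinset, Finset.mem_Icc] at ha
      simp only [box, Fintype.mem_piFinset, Finset.mem_Icc]
      intro j; have := ha j; omega
    · intro a _; funext j; dsimp only; omega
    · intro a _; funext j; dsimp only; omega
    · intro a _; rfl
  have hcardA : ∀ N : ℕ, (box d N).card = (2 * N + 1) ^ d := by
    intro N
    rw [box, Fintype.card_piFinset]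
    simp only [Int.card_Icc, Finset.prod_const, Finset.card_univ, Fintype.card_fin]
    congr 1
    omega
  have hcardB : ∀ N : ℕ, (B N).card = (2 * N + 1) ^ d := by
    intro N
    rw [hB, Fintype.card_piFinset]
    have h1 : ∀ j, (((N : ℤ) + l j) + 1 - (-(N : ℤ) + l j)).toNat = 2 * N + 1 := by
      intro j; omega
    simp [Int.card_Icc, h1]
  have hinter : ∀ N : ℕ, ((box d N) ∩ B N).card = ∏ j, (2 * (N : ℤ) + 1 - |l j|).toNat := by
    intro N
    have hset : (box d N) ∩ B N =
        Fintype.piFinset fun j =>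
          Finset.Icc (max (-(N : ℤ)) (-(N : ℤ) + l j)) (min (N : ℤ) ((N : ℤ) + l j)) := by
      ext k
      simp only [Finset.mem_inter, box, hB, Fintype.mem_piFinset, Finset.mem_Icc]
      constructor
      · rintro ⟨h1, h2⟩ j
        have a := h1 j; have b := h2 j
        omega
      · intro h
        refine ⟨fun j => ?_, fun j => ?_⟩ <;> (have := h j; omega)
    rw [hset, Fintype.card_piFinset]
    refine Finset.prod_congr rfl fun j _ => ?_
    rw [Int.card_Icc]
    rcases le_total 0 (l j) with h | h
    · rw [abs_of_nonneg h]; omega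
    · rw [abs_of_nonpos h]; omega
  -- the bound
  have hM0 : 0 ≤ M := le_trans (norm_nonneg _) (hM fun _ => 0)
  set T : ℕ → ℝ := fun N => ((2 * N + 1 : ℕ) : ℝ) ^ d with hT
  set P : ℕ → ℝ := fun N => (((box d N) ∩ B N).card : ℝ) with hP
  have hTpos : ∀ N, 0 < T N := by
    intro N
    apply pow_pos
    positivity
  have key : ∀ N, ‖boxAvg g N - boxAvg f N‖ ≤ 2 * M * (1 - P N / T N) := by
    intro N
    have hdiff : boxAvg g N - boxAvg f N =
        (((2 * N + 1 : ℕ) : ℂ) ^ d)⁻¹ * ((∑ k ∈ B N, f k) - ∑ k ∈ box d N, f k) := by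
      rw [boxAvg, boxAvg, hsum N]; ring
    have hsplit : (∑ k ∈ B N, f k) - ∑ k ∈ box d N, f k =
        (∑ k ∈ B N \ box d N, f k) - ∑ k ∈ box d N \ B N, f k := by
      have e1 : ∑ k ∈ B N ∩ box d N, f k + ∑ k ∈ B N \ box d N, f k = ∑ k ∈ B N, f k :=
        Finset.sum_inter_add_sum_sdiff _ _ _
      have e2 : ∑ k ∈ box d N ∩ B N, f k + ∑ k ∈ box d N \ B N, f k = ∑ k ∈ box d N, f k :=
        Finset.sum_inter_add_sum_sdiff _ _ _
      rw [Finset.inter_comm] at e1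
      linear_combination e2 - e1
    have hnorm1 : ∀ (s : Finset (Fin d → ℤ)), ‖∑ k ∈ s, f k‖ ≤ (s.card : ℝ) * M := by
      intro s
      calc ‖∑ k ∈ s, f k‖ ≤ ∑ k ∈ s, ‖f k‖ := norm_sum_le _ _
        _ ≤ ∑ _k ∈ s, M := Finset.sum_le_sum fun k _ => by
              exact hM k
        _ = (s.card : ℝ) * M := by rw [Finset.sum_const, nsmul_eq_mul]
    have hc1 : ((B N \ box d N).card : ℝ) = T N - P N := by
      have h0 := Finset.card_sdiff_add_card_inter (B N) (box d N)
      rw [Finset.inter_comm, hcardB N] at h0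
      have hcast := congrArg (Nat.cast : ℕ → ℝ) h0
      push_cast at hcast
      simp only [hT, hP]
      push_cast
      linarith
    have hc2 : ((box d N \ B N).card : ℝ) = T N - P N := by
      have h0 := Finset.card_sdiff_add_card_inter (box d N) (B N)
      rw [hcardA N] at h0
      have hcast := congrArg (Nat.cast : ℕ → ℝ) h0
      push_cast at hcast
      simp only [hT, hP]
      push_cast
      linarith
    rw [hdiff]
    rw [norm_mul, norm_inv, norm_pow, Complex.norm_natCast]
    have hb : ‖(∑ k ∈ B N, f k) - ∑ k ∈ box d N, f k‖ ≤ 2 * M * (T N - P N) := by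
      rw [hsplit]
      calc ‖(∑ k ∈ B N \ box d N, f k) - ∑ k ∈ box d N \ B N, f k‖
          ≤ ‖∑ k ∈ B N \ box d N, f k‖ + ‖∑ k ∈ box d N \ B N, f k‖ := norm_sub_le _ _
        _ ≤ ((B N \ box d N).card : ℝ) * M + ((box d N \ B N).card : ℝ) * M :=
            add_le_add (hnorm1 _) (hnorm1 _)
        _ = 2 * M * (T N - P N) := by rw [hc1, hc2]; ring
    have hTN : (0 : ℝ) < ((2 * N + 1 : ℕ) : ℝ) ^ d := hTpos N
    calc (((2 * N + 1 : ℕ) : ℝ) ^ d)⁻¹ * ‖(∑ k ∈ B N, f k) - ∑ k ∈ box d N, f k‖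
        ≤ (((2 * N + 1 : ℕ) : ℝ) ^ d)⁻¹ * (2 * M * (T N - P N)) := by
          exact mul_le_mul_of_nonneg_left hb (by positivity)
      _ = 2 * M * (1 - P N / T N) := by
          have hTne : (((2 * N + 1 : ℕ) : ℝ) ^ d) ≠ 0 := ne_of_gt (hTpos N)
          simp only [hT, hP]
          field_simp
  -- the bound tends to zero
  have hQ : Tendsto (fun N => P N / T N) atTop (nhds 1) := by
    have hprod : ∀ N, P N / T N =
        ∏ j, (((2 * (N : ℤ) + 1 - |l j|).toNat : ℝ) / ((2 * N + 1 : ℕ) : ℝ)) := by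
      intro N
      simp only [hP, hT, hinter N]
      push_cast
      rw [Finset.prod_div_distrib, Finset.prod_const]
      simp
    rw [show (1 : ℝ) = ∏ _j : Fin d, (1 : ℝ) by simp]
    refine Tendsto.congr (fun N => (hprod N).symm) (tendsto_finset_prod _ fun j _ => ?_)
    have h1 : Tendsto (fun N : ℕ => 1 - ((l j).natAbs : ℝ) / ((2 * N + 1 : ℕ) : ℝ))
        atTop (nhds 1) := by
      have := Filter.Tendsto.div_atTop (f := fun _ : ℕ => ((l j).natAbs : ℝ))
        (tendsto_const_nhds) two_n_one_tendsto
      have h2 := (tendsto_const_nhds (x := (1:ℝ)) (f := atTop (α := ℕ))).sub this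
      simpa using h2
    refine Tendsto.congr' ?_ h1
    filter_upwards [eventually_ge_atTop (l j).natAbs] with N hN
    have he : ((2 * (N : ℤ) + 1 - |l j|).toNat : ℝ) = ((2 * N + 1 : ℕ) : ℝ) - ((l j).natAbs : ℝ) := by
      have h3 : (2 * (N : ℤ) + 1 - |l j|).toNat = 2 * N + 1 - (l j).natAbs := by
        have := Int.abs_eq_natAbs (l j)
        omega
      rw [h3, Nat.cast_sub (by omega)]
    rw [he]
    have hpos : (0 : ℝ) < ((2 * N + 1 : ℕ) : ℝ) := by positivity
    field_simp
  have hbound : Tendsto (fun N => 2 * M * (1 - P N / T N)) atTop (nhds 0) := by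
    have := ((tendsto_const_nhds (x := (1:ℝ)) (f := atTop (α := ℕ))).sub hQ).const_mul (2 * M)
    simpa using this
  have hdiff0 : Tendsto (fun N => boxAvg g N - boxAvg f N) atTop (nhds 0) := by
    rw [tendsto_zero_iff_norm_tendsto_zero]
    exact squeeze_zero (fun N => norm_nonneg _) key hbound
  have : Tendsto (fun N => (boxAvg g N - boxAvg f N) + boxAvg f N) atTop (nhds (0 + L)) :=
    hdiff0.add hf
  simpa [HasMean] using this

lemma onTorus_ne_zero {d : ℕ} {ω : Fin d → ℂ} (hω : OnTorus ω) (j : Fin d) : ω j ≠ 0 := by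
  intro h
  have := hω j
  rw [h] at this
  simp at this

lemma zpowVec_add {d : ℕ} {ω : Fin d → ℂ} (hω : ∀ j, ω j ≠ 0) (k m : Fin d → ℤ) :
    zpowVec ω (fun j => k j + m j) = zpowVec ω k * zpowVec ω m := by
  rw [zpowVec, zpowVec, zpowVec, ← Finset.prod_mul_distrib]
  exact Finset.prod_congr rfl fun j _ => zpow_add₀ (hω j) _ _

lemma conj_zpowVec {d : ℕ} (ω : Fin d → ℂ) (k : Fin d → ℤ) :
    (starRingEnd ℂ) (zpowVec ω k) = zpowVec (fun j => (starRingEnd ℂ) (ω j)) k := by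
  rw [zpowVec, map_prod]
  exact Finset.prod_congr rfl fun j _ => map_zpow₀ _ _ _

lemma conj_zpowVec_mul_self {d : ℕ} {ω : Fin d → ℂ} (hω : OnTorus ω) (k : Fin d → ℤ) :
    (starRingEnd ℂ) (zpowVec ω k) * zpowVec ω k = 1 := by
  rw [conj_zpowVec, zpowVec, zpowVec, ← Finset.prod_mul_distrib]
  have h1 : ∀ j, (starRingEnd ℂ) (ω j) * ω j = 1 := by
    intro j
    rw [mul_comm, Complex.mul_conj]
    rw [Complex.normSq_eq_norm_sq, hω j]
    norm_num
  calc (∏ j, (starRingEnd ℂ) (ω j) ^ (k j) * ω j ^ (k j))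
      = ∏ j, ((starRingEnd ℂ) (ω j) * ω j) ^ (k j) :=
        Finset.prod_congr rfl fun j _ => (mul_zpow _ _ _).symm
    _ = 1 := by simp [h1]

lemma abs_zpowVec_one {d : ℕ} {ω : Fin d → ℂ} (hω : OnTorus ω) (k : Fin d → ℤ) :
    ‖zpowVec ω k‖ = 1 := by
  rw [zpowVec, norm_prod]
  have : ∀ j, ‖ω j ^ (k j)‖ = 1 := by
    intro j
    rw [norm_zpow, hω j, one_zpow]
  simp [this]


/-- The Bohr spectrum of an almost periodic infinitesimal flex `u`
of `C` is contained in the RUM spectrum: if `[u, e_ω] ≠ 0` then `ω ∈ Ω(C)`. -/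
theorem bohrSpectrum_subset_RUM {d : ℕ} (C : CrystalFramework d)
    (u : C.V × (Fin d → ℤ) → Fin d → ℂ)
    (hflex : C.IsFlex u)
    (hap : IsBohrAP (fun k (vi : C.V × Fin d) => u (vi.1, k) vi.2))
    (ω : Fin d → ℂ) (hω : OnTorus ω)
    (L : C.V × Fin d → ℂ) (hLne : L ≠ 0)
    (hL : HasMeanPairing (fun k (vi : C.V × Fin d) => u (vi.1, k) vi.2)
      (eOmega ω) L) :
    ω ∈ C.RUM := by
  obtain ⟨M, hM⟩ := hap.1
  have hωne : ∀ j, ω j ≠ 0 := onTorus_ne_zero hω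
  -- per-vertex shifted mean
  have step : ∀ (v : C.V) (l : Fin d → ℤ) (i : Fin d),
      HasMean (fun k => u (v, fun j => l j + k j) i * (starRingEnd ℂ) (zpowVec ω k))
        (zpowVec ω l * L (v, i)) := by
    intro v l i
    have h0 : HasMean (fun k => u (v, k) i * (starRingEnd ℂ) (zpowVec ω k)) (L (v, i)) :=
      hL (v, i)
    have hbdd : ∀ k, ‖u (v, k) i * (starRingEnd ℂ) (zpowVec ω k)‖ ≤ M := by
      intro k
      rw [norm_mul, Complex.norm_conj, abs_zpowVec_one hω, mul_one]
      exact hM k (v, i)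
    have h1 := hasMean_shift hbdd h0 l
    have h2 := h1.mul_const (zpowVec ω l)
    rw [mul_comm (zpowVec ω l)]
    refine hasMean_congr (fun k => ?_) h2
    have e1 : (fun j => k j + l j) = (fun j => l j + k j) := funext fun j => add_comm _ _
    show u (v, fun j => k j + l j) i * (starRingEnd ℂ) (zpowVec ω fun j => k j + l j) *
        zpowVec ω l = _
    rw [e1, zpowVec_add hωne l k, map_mul]
    calc u (v, fun j => l j + k j) i *
          ((starRingEnd ℂ) (zpowVec ω l) * (starRingEnd ℂ) (zpowVec ω k)) * zpowVec ω l
        = u (v, fun j => l j + k j) i * (starRingEnd ℂ) (zpowVec ω k) *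
            ((starRingEnd ℂ) (zpowVec ω l) * zpowVec ω l) := by ring
      _ = u (v, fun j => l j + k j) i * (starRingEnd ℂ) (zpowVec ω k) := by
          rw [conj_zpowVec_mul_self hω, mul_one]
  refine ⟨hω, fun v i => L (v, i), ?_, ?_⟩
  · intro hb
    apply hLne
    funext vi
    have := congrFun (congrFun hb vi.1) vi.2
    simpa using this
  · intro e k
    set v := (C.fst e).1 with hv
    set l := (C.fst e).2 with hl
    set w := (C.snd e).1 with hw
    set m := (C.snd e).2 with hm
    have hzero : HasMean (fun _ : Fin d → ℤ => (0 : ℂ)) 0 := by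
      have h : ∀ N, boxAvg (fun _ : Fin d → ℤ => (0 : ℂ)) N = 0 := by
        intro N; simp [boxAvg]
      exact (tendsto_const_nhds (x := (0 : ℂ))).congr fun N => (h N).symm
    have hGeq : ∀ k' : Fin d → ℤ,
        ∑ i, (C.edgeVec e i : ℂ) *
          (u (v, fun j => l j + k' j) i * (starRingEnd ℂ) (zpowVec ω k') -
           u (w, fun j => m j + k' j) i * (starRingEnd ℂ) (zpowVec ω k')) = 0 := by
      intro k'
      have hfe := hflex e k'
      calc ∑ i, (C.edgeVec e i : ℂ) *
            (u (v, fun j => l j + k' j) i * (starRingEnd ℂ) (zpowVec ω k') -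
             u (w, fun j => m j + k' j) i * (starRingEnd ℂ) (zpowVec ω k'))
          = (∑ i, (C.edgeVec e i : ℂ) *
              (u (v, fun j => l j + k' j) i - u (w, fun j => m j + k' j) i)) *
              (starRingEnd ℂ) (zpowVec ω k') := by
            rw [Finset.sum_mul]
            exact Finset.sum_congr rfl fun i _ => by ring
        _ = 0 := by rw [hfe, zero_mul]
    have hG0 : HasMean (fun k' : Fin d → ℤ =>
        ∑ i, (C.edgeVec e i : ℂ) *
          (u (v, fun j => l j + k' j) i * (starRingEnd ℂ) (zpowVec ω k') -
           u (w, fun j => m j + k' j) i * (starRingEnd ℂ) (zpowVec ω k'))) 0 :=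
      hasMean_congr (fun k' => (hGeq k').symm) hzero
    have hGS : HasMean (fun k' : Fin d → ℤ =>
        ∑ i, (C.edgeVec e i : ℂ) *
          (u (v, fun j => l j + k' j) i * (starRingEnd ℂ) (zpowVec ω k') -
           u (w, fun j => m j + k' j) i * (starRingEnd ℂ) (zpowVec ω k')))
        (∑ i, (C.edgeVec e i : ℂ) *
          (zpowVec ω l * L (v, i) - zpowVec ω m * L (w, i))) :=
      hasMean_finset_sum Finset.univ _ _
        (fun i _ => ((step v l i).sub (step w m i)).const_mul _)
    have hS : (∑ i, (C.edgeVec e i : ℂ) *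
        (zpowVec ω l * L (v, i) - zpowVec ω m * L (w, i))) = 0 :=
      tendsto_nhds_unique hGS hG0
    calc ∑ i, (C.edgeVec e i : ℂ) *
          (C.phaseField ω (fun v i => L (v, i)) (v, fun j => l j + k j) i -
           C.phaseField ω (fun v i => L (v, i)) (w, fun j => m j + k j) i)
        = ∑ i, zpowVec ω k * ((C.edgeVec e i : ℂ) *
            (zpowVec ω l * L (v, i) - zpowVec ω m * L (w, i))) := by
          refine Finset.sum_congr rfl fun i _ => ?_
          simp only [CrystalFramework.phaseField]
          rw [zpowVec_add hωne l k, zpowVec_add hωne m k]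
          ring
      _ = zpowVec ω k * ∑ i, (C.edgeVec e i : ℂ) *
            (zpowVec ω l * L (v, i) - zpowVec ω m * L (w, i)) := by
          rw [Finset.mul_sum]
      _ = 0 := by rw [hS, mul_zero]
end
end
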